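/- Let Y be a locally compact Hausdorff topological space, U a topological space, I = [0,1] the unit interval, and E : I × U → Y a continuous map such that the track map I × U → I × Y, (t, u) ↦ (t, E(t,u)), is an open embedding. Then each slice E_t := E(t, ·) : U → Y is an open embedding, and the map H : I × OnePoint Y → OnePoint U defined by H(t, ∞) = ∞, H(t, y) = u whenever y = E(t, u), and H(t, y) = ∞ whenever y is not in the range of E_t, is continuous. In particular, the Pontryagin–Thom collapse maps of E_0 and of E_1 are homotopic as pointed maps OnePoint Y → OnePoint U. -/

import Mathlib

open scoped Classical unitInterval
open OnePoint
open Topology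

/-- The Pontryagin–Thom collapse map of a map `e : U → Y`: `∞ ↦ ∞`, `e u ↦ u`,
and every point outside the range of `e` goes to `∞`. -/
noncomputable def ptCollapse {U Y : Type*} (e : U → Y) : OnePoint Y → OnePoint U :=
  fun oy =>
    OnePoint.rec ∞ (fun y => if h : ∃ u, e u = y then (h.choose : OnePoint U) else ∞) oy

/-- The levelwise Pontryagin–Thom collapse of a family `E : I × U → Y`:
at time `t` it is the collapse map of the slice `E (t, ·)`. -/
noncomputable def ptCollapseFamily {U Y : Type*} (E : unitInterval × U → Y) :
    unitInterval × OnePoint Y → OnePoint U :=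
  fun p => ptCollapse (fun u => E (p.1, u)) p.2


private lemma ptCollapse_coe {U Y : Type*} (e : U → Y) (y : Y) :
    ptCollapse e (y : OnePoint Y) =
      if h : ∃ u, e u = y then (h.choose : OnePoint U) else ∞ := rfl

/-- Applying the Pontryagin–Thom construction to an isotopy yields a homotopy:
if `Y` is locally compact Hausdorff and `E : I × U → Y` is continuous with the
track map `(t, u) ↦ (t, E (t, u))` an open embedding, then each slice
`E (t, ·)` is an open embedding, the levelwise collapse map
`H : I × OnePoint Y → OnePoint U` (with `H (t, ∞) = ∞`, `H (t, E (t, u)) = u`,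
and `H (t, y) = ∞` for `y` outside the range of `E (t, ·)`) is continuous, and
in particular it is a pointed homotopy from the collapse map of `E (0, ·)` to
the collapse map of `E (1, ·)`. -/
theorem ptCollapse_isotopy_homotopy {U Y : Type*} [TopologicalSpace U]
    [TopologicalSpace Y] [LocallyCompactSpace Y] [T2Space Y]
    (E : unitInterval × U → Y) (hE : Continuous E)
    (htrack : Topology.IsOpenEmbedding (fun p : unitInterval × U => (p.1, E p))) :
    (∀ t : unitInterval, Topology.IsOpenEmbedding (fun u => E (t, u))) ∧
    Continuous (ptCollapseFamily E) ∧
    (∀ t : unitInterval, ptCollapseFamily E (t, ∞) = ∞) ∧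
    (∀ (t : unitInterval) (u : U),
      ptCollapseFamily E (t, (E (t, u) : OnePoint Y)) = (u : OnePoint U)) ∧
    (∀ (t : unitInterval) (y : Y), (¬ ∃ u, E (t, u) = y) →
      ptCollapseFamily E (t, (y : OnePoint Y)) = ∞) ∧
    (∀ oy : OnePoint Y, ptCollapseFamily E (0, oy) = ptCollapse (fun u => E (0, u)) oy) ∧
    (∀ oy : OnePoint Y, ptCollapseFamily E (1, oy) = ptCollapse (fun u => E (1, u)) oy) := by
  set Etk : unitInterval × U → unitInterval × Y := fun p => (p.1, E p) with hEtkdef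
  -- injectivity of each slice
  have hsliceinj : ∀ t : unitInterval, Function.Injective (fun u => E (t, u)) := by
    intro t a b h
    have h2 : Etk (t, a) = Etk (t, b) := by
      simp only [hEtkdef]
      exact Prod.ext rfl h
    simpa using htrack.injective h2
  -- value lemmas
  have hval : ∀ (t : unitInterval) (u : U),
      ptCollapseFamily E (t, (E (t, u) : OnePoint Y)) = (u : OnePoint U) := by
    intro t u
    have hex : ∃ v, E (t, v) = E (t, u) := ⟨u, rfl⟩
    have : ptCollapseFamily E (t, (E (t, u) : OnePoint Y)) = (hex.choose : OnePoint U) := by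
      simp only [ptCollapseFamily]
      rw [ptCollapse_coe, dif_pos hex]
    rw [this]
    exact congrArg _ (hsliceinj t hex.choose_spec)
  have hvalInf : ∀ (t : unitInterval) (y : Y), (¬ ∃ u, E (t, u) = y) →
      ptCollapseFamily E (t, (y : OnePoint Y)) = ∞ := by
    intro t y h
    simp only [ptCollapseFamily]
    rw [ptCollapse_coe, dif_neg h]
  -- each slice is an open embedding
  have hslice : ∀ t : unitInterval, Topology.IsOpenEmbedding (fun u => E (t, u)) := by
    intro t
    have hcomp : IsEmbedding ((fun y : Y => (t, y)) ∘ (fun u => E (t, u))) := by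
      have : ((fun y : Y => (t, y)) ∘ (fun u => E (t, u))) = Etk ∘ (fun u : U => (t, u)) := rfl
      rw [this]
      exact htrack.isEmbedding.comp (isEmbedding_prodMkRight t)
    have hemb : IsEmbedding (fun u => E (t, u)) :=
      ((isEmbedding_prodMkRight t).of_comp_iff).mp hcomp
    refine ⟨hemb, ?_⟩
    have hr : Set.range (fun u => E (t, u)) = (fun y : Y => (t, y)) ⁻¹' (Set.range Etk) := by
      ext y
      constructor
      · rintro ⟨u, rfl⟩; exact ⟨(t, u), rfl⟩
      · rintro ⟨⟨s, u⟩, hsu⟩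
        have h1 : s = t := congrArg Prod.fst hsu
        have h2 : E (s, u) = y := congrArg Prod.snd hsu
        exact ⟨u, by rw [← h1]; exact h2⟩
    rw [hr]
    exact htrack.isOpen_range.preimage (Continuous.prodMk_right t)
  -- the open embedding `j : I × Y → I × OnePoint Y`
  have hj : Topology.IsOpenEmbedding
      (fun p : unitInterval × Y => (p.1, (p.2 : OnePoint Y))) :=
    Topology.IsOpenEmbedding.id.prodMap OnePoint.isOpenEmbedding_coe
  set j : unitInterval × Y → unitInterval × OnePoint Y :=
    fun p => (p.1, (p.2 : OnePoint Y)) with hjdef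
  -- membership description of images
  have hmem : ∀ (t : unitInterval) (y : Y) (V : Set U),
      ((t, (y : OnePoint Y)) ∈ j '' (Etk '' (Set.univ ×ˢ V))) ↔ ∃ u ∈ V, E (t, u) = y := by
    intro t y V
    constructor
    · rintro ⟨⟨s, z⟩, ⟨⟨s', u⟩, ⟨-, hu⟩, hzu⟩, hj2⟩
      have hs : s = t := congrArg Prod.fst hj2
      have hz : (z : OnePoint Y) = (y : OnePoint Y) := congrArg Prod.snd hj2
      have hz' : z = y := OnePoint.coe_injective hz
      have hs' : s' = s := congrArg Prod.fst hzu
      have hE' : E (s', u) = z := congrArg Prod.snd hzu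
      exact ⟨u, hu, by rw [← hs, ← hs']; rw [hE', hz']⟩
    · rintro ⟨u, hu, hEu⟩
      exact ⟨(t, E (t, u)), ⟨(t, u), ⟨trivial, hu⟩, rfl⟩, by rw [hEu]⟩
  have hinfmem : ∀ (t : unitInterval) (S : Set (unitInterval × Y)), (t, ∞) ∉ j '' S := by
    rintro t S ⟨⟨s, z⟩, -, hj2⟩
    exact OnePoint.coe_ne_infty z (congrArg Prod.snd hj2)
  -- continuity
  have hcont : Continuous (ptCollapseFamily E) := by
    rw [continuous_def]
    intro s hs
    set V : Set U := (fun u : U => (u : OnePoint U)) ⁻¹' s with hVdef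
    have hVopen : IsOpen V := hs.2
    by_cases hinf : ∞ ∈ s
    · -- complement of the image of a compact set
      have hVc : IsCompact Vᶜ := ((OnePoint.isOpen_iff_of_mem' hinf).mp hs).1
      have hKc : IsCompact (j '' (Etk '' (Set.univ ×ˢ Vᶜ))) :=
        ((isCompact_univ.prod hVc).image htrack.continuous).image hj.continuous
      have hKcl : IsClosed (j '' (Etk '' (Set.univ ×ˢ Vᶜ))) := hKc.isClosed
      have heq : ptCollapseFamily E ⁻¹' s = (j '' (Etk '' (Set.univ ×ˢ Vᶜ)))ᶜ := by
        ext ⟨t, oy⟩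
        induction oy with
        | infty =>
          simp only [Set.mem_preimage, Set.mem_compl_iff]
          exact ⟨fun _ => hinfmem t _, fun _ => hinf⟩
        | coe y =>
          simp only [Set.mem_preimage, Set.mem_compl_iff, hmem t y Vᶜ]
          by_cases hex : ∃ u, E (t, u) = y
          · obtain ⟨u, rfl⟩ := hex
            rw [hval t u]
            constructor
            · rintro hu ⟨v, hv, hvE⟩
              exact hv (hsliceinj t hvE ▸ hu)
            · intro h
              by_contra hu
              exact h ⟨u, hu, rfl⟩
          · rw [hvalInf t y hex]
            exact ⟨fun _ ⟨u, _, hu⟩ => hex ⟨u, hu⟩, fun _ => hinf⟩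
      rw [heq]
      exact hKcl.isOpen_compl
    · -- the image of an open set
      have heq : ptCollapseFamily E ⁻¹' s = j '' (Etk '' (Set.univ ×ˢ V)) := by
        ext ⟨t, oy⟩
        induction oy with
        | infty =>
          simp only [Set.mem_preimage]
          exact ⟨fun h => absurd h hinf, fun h => absurd h (hinfmem t _)⟩
        | coe y =>
          simp only [Set.mem_preimage, hmem t y V]
          by_cases hex : ∃ u, E (t, u) = y
          · obtain ⟨u, rfl⟩ := hex
            rw [hval t u]
            constructor
            · intro hu; exact ⟨u, hu, rfl⟩
            · rintro ⟨v, hv, hvE⟩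
              exact hsliceinj t hvE ▸ hv
          · rw [hvalInf t y hex]
            exact ⟨fun h => absurd h hinf, fun ⟨u, _, hu⟩ => absurd ⟨u, hu⟩ hex⟩
      rw [heq]
      exact hj.isOpenMap _ (htrack.isOpenMap _ (isOpen_univ.prod hVopen))
  exact ⟨hslice, hcont, fun t => rfl, hval, hvalInf, fun oy => rfl, fun oy => rfl⟩
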